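/- arXiv:1504.00631 — 3 statements merged into one kernel-verified Lean document; each statement's English description precedes it below -/
import Mathlib

section
/- Let 𝒟 be a finite subset of ℂ with 0 ∈ 𝒟 and 𝒟 ≠ {0}, and let d* = min{|a| : a ∈ 𝒟, a ≠ 0}. Then for every r ∈ (0,1) there exists a natural number k_r ≥ 1 such that for every n ∈ ℕ, every nonzero polynomial p of degree ≤ n all of whose coefficients lie in 𝒟, every ρ ∈ (0,r), and every ε > 0, the set {λ ∈ ℂ : ρ < |λ| < r and |p(λ)| < εⁿ} can be covered by at most k_r closed disks of radius d*^{-1/k_r}·(2ε/(ρ(1−r)))^{n/k_r}. -/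
open MeasureTheory Set Filter Metric
open scoped ENNReal NNReal Topology

noncomputable section

/-- `ν` is *the* self-similar measure on `ℂ` for the IFS `(z ↦ λ z + aᵢ)_{i∈Λ}` with
weights `p`, characterized as the (unique) Borel probability measure satisfying
`ν = ∑ i, pᵢ • (fᵢ)_* ν` where `fᵢ z = λ z + aᵢ`. -/
def IsSelfSimilarMeasure {Λ : Type*} [Fintype Λ] (lam : ℂ) (a : Λ → ℂ) (p : Λ → ℝ)
    (ν : Measure ℂ) : Prop :=
  IsProbabilityMeasure ν ∧
    ν = ∑ i : Λ, ENNReal.ofReal (p i) • ν.map (fun z => lam * z + a i)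

/-- The topological support of a measure on `ℂ`: points all of whose neighborhoods
have positive measure. -/
def msupport (ν : Measure ℂ) : Set ℂ := {x : ℂ | ∀ u ∈ nhds x, ν u ≠ 0}

/-- Entropy `h(p) = -∑ pᵢ log pᵢ` of a probability vector. -/
def entropy {Λ : Type*} [Fintype Λ] (p : Λ → ℝ) : ℝ := -∑ i : Λ, p i * Real.log (p i)

/-- Similarity dimension `s(λ, p) = h(p) / (-log |λ|)`. -/
def simDim {Λ : Type*} [Fintype Λ] (lam : ℂ) (p : Λ → ℝ) : ℝ :=
  entropy p / (-Real.log ‖lam‖)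

/-- Fourier transform of a finite measure on `ℂ`:
`ν̂(ξ) = ∫ e^{2 π i Re(z conj ξ)} dν(z)`. -/
def mft (ν : Measure ℂ) (ξ : ℂ) : ℂ :=
  ∫ z, Complex.exp (2 * Real.pi * Complex.I * (((z * (starRingEnd ℂ) ξ).re : ℝ) : ℂ)) ∂ν

/-- Convolution of two measures on `ℂ`: pushforward of the product under addition. -/
def mconv (μ ν : Measure ℂ) : Measure ℂ :=
  Measure.map (fun q : ℂ × ℂ => q.1 + q.2) (μ.prod ν)

/-- `ν` is absolutely continuous w.r.t. Lebesgue measure on `ℂ` with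
Radon–Nikodym derivative in `L^q`. -/
def ACWithLqDensity (ν : Measure ℂ) (q : ℝ) : Prop :=
  ν ≪ (volume : Measure ℂ) ∧
    MemLp (fun z => (ν.rnDeriv volume z).toReal) (ENNReal.ofReal q) volume

/-- Distance from a real number to the nearest integer. -/
def dni (x : ℝ) : ℝ := |x - round x|

/-- `Δ_n(μ, c)`: the minimal distance between distinct level-`n` cylinders of the
IFS `(z ↦ μ z + c_γ)_{γ∈Γ}`. -/
def Delta {Γ : Type*} [Fintype Γ] (μ : ℂ) (c : Γ → ℂ) (n : ℕ) : ℝ :=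
  sInf {x : ℝ | ∃ i j : Fin n → Γ, i ≠ j ∧
    x = ‖∑ ℓ : Fin n, μ ^ (ℓ : ℕ) * (c (i ℓ) - c (j ℓ))‖}

/-- The (lower Hausdorff) dimension of a measure on `ℂ`:
`dim μ = inf {dim_H A : A Borel, μ A > 0}`. -/
def lowerDim (μ : Measure ℂ) : ℝ≥0∞ :=
  sInf {d : ℝ≥0∞ | ∃ A : Set ℂ, MeasurableSet A ∧ 0 < μ A ∧ d = dimH A}

section PolyCoverAux

set_option maxHeartbeats 1000000

open Polynomial


-- multiset product helpers over ℝ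
lemma mprod_nonneg (m : Multiset ℝ) (h : ∀ x ∈ m, 0 ≤ x) : 0 ≤ m.prod := by
  induction m using Multiset.induction with
  | empty => simp
  | cons a s ih =>
    simp only [Multiset.prod_cons]
    exact mul_nonneg (h a (Multiset.mem_cons_self a s)) (ih fun x hx => h x (Multiset.mem_cons_of_mem hx))

lemma mprod_ge (m : Multiset ℝ) (a : ℝ) (ha : 0 ≤ a) (h : ∀ x ∈ m, a ≤ x) :
    a ^ Multiset.card m ≤ m.prod := by
  induction m using Multiset.induction with
  | empty => simp
  | cons b s ih =>
    simp only [Multiset.prod_cons, Multiset.card_cons, pow_succ']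
    exact mul_le_mul (h b (Multiset.mem_cons_self b s))
      (ih fun x hx => h x (Multiset.mem_cons_of_mem hx)) (pow_nonneg ha _)
      (ha.trans (h b (Multiset.mem_cons_self b s)))

lemma mprod_le (m : Multiset ℝ) (a : ℝ) (h0 : ∀ x ∈ m, 0 ≤ x) (h : ∀ x ∈ m, x ≤ a) :
    m.prod ≤ a ^ Multiset.card m := by
  induction m using Multiset.induction with
  | empty => simp
  | cons b s ih =>
    simp only [Multiset.prod_cons, Multiset.card_cons, pow_succ']
    exact mul_le_mul (h b (Multiset.mem_cons_self b s))
      (ih (fun x hx => h0 x (Multiset.mem_cons_of_mem hx)) fun x hx => h x (Multiset.mem_cons_of_mem hx))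
      (mprod_nonneg _ fun x hx => h0 x (Multiset.mem_cons_of_mem hx))
      ((h0 b (Multiset.mem_cons_self b s)).trans (h b (Multiset.mem_cons_self b s)))

lemma norm_mprod (m : Multiset ℂ) : ‖m.prod‖ = (m.map (fun z => ‖z‖)).prod := by
  induction m using Multiset.induction with
  | empty => simp
  | cons b s ih => simp [Multiset.prod_cons, norm_mul, ih]


lemma geom_bound (t : ℝ) (ht0 : 0 ≤ t) (ht : t < 1) (N : ℕ) :
    ∑ j ∈ Finset.range N, t ^ j ≤ (1 - t)⁻¹ := by
  have h1 : t ≠ 1 := ne_of_lt ht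
  rw [geom_sum_eq h1]
  have h2 : (0:ℝ) < 1 - t := by linarith
  have h3 : (t ^ N - 1) / (t - 1) = (1 - t ^ N) / (1 - t) := by
    rw [div_eq_div_iff (by linarith) (ne_of_gt h2)]; ring
  rw [h3, div_le_iff₀ h2, inv_mul_cancel₀ (ne_of_gt h2)]
  have := pow_nonneg ht0 N
  linarith

lemma eval_norm_le (Q : ℂ[X]) (M t : ℝ) (hM0 : 0 ≤ M) (hM : ∀ j, ‖Q.coeff j‖ ≤ M)
    (ht0 : 0 ≤ t) (ht : t < 1) (w : ℂ) (hw : ‖w‖ ≤ t) : ‖Q.eval w‖ ≤ M / (1 - t) := by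
  rw [Polynomial.eval_eq_sum_range]
  calc ‖∑ j ∈ Finset.range (Q.natDegree + 1), Q.coeff j * w ^ j‖
      ≤ ∑ j ∈ Finset.range (Q.natDegree + 1), ‖Q.coeff j * w ^ j‖ := norm_sum_le _ _
    _ ≤ ∑ j ∈ Finset.range (Q.natDegree + 1), M * t ^ j := by
        refine Finset.sum_le_sum fun j _ => ?_
        rw [norm_mul, norm_pow]
        exact mul_le_mul (hM j) (pow_le_pow_left₀ (norm_nonneg w) hw j) (by positivity) hM0
    _ = M * ∑ j ∈ Finset.range (Q.natDegree + 1), t ^ j := by rw [Finset.mul_sum]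
    _ ≤ M / (1 - t) := by
        rw [div_eq_mul_inv]
        exact mul_le_mul_of_nonneg_left (geom_bound t ht0 ht _) hM0

lemma root_count (Q : ℂ[X]) (hQ0 : Q.coeff 0 ≠ 0) (M d s t : ℝ) (hd : 0 < d)
    (hdc : d ≤ ‖Q.coeff 0‖) (hM : ∀ j, ‖Q.coeff j‖ ≤ M) (hs : 0 < s) (hst : s < t)
    (ht : t < 1) :
    d * (t / s) ^ (Multiset.card (Q.roots.filter (fun z => ‖z‖ ≤ s))) ≤ M / (1 - t) := by
  classical
  have ht0 : (0:ℝ) < t := hs.trans hst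
  have hM0 : (0:ℝ) ≤ M := le_trans (norm_nonneg _) (hM 0)
  set N := Q.roots.filter (fun z => ‖z‖ ≤ s) with hNdef
  set k := Multiset.card N with hkdef
  have hNle : N ≤ Q.roots := Multiset.filter_le _ _
  have hdvd : (N.map fun a => X - C a).prod ∣ Q :=
    dvd_trans (Multiset.prod_dvd_prod_of_le (Multiset.map_le_map hNle))
      (prod_multiset_X_sub_C_dvd Q)
  obtain ⟨B, hB⟩ := hdvd
  set F : ℂ[X] := B * (N.map fun a => C ((t:ℂ)^2) - C ((starRingEnd ℂ) a) * X).prod with hFdef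
  -- evaluation identities
  have hevalQ : ∀ w : ℂ, ‖Q.eval w‖ = (N.map fun a => ‖w - a‖).prod * ‖B.eval w‖ := by
    intro w
    rw [hB, eval_mul, norm_mul, eval_multiset_prod]
    congr 1
    rw [Multiset.map_map, norm_mprod, Multiset.map_map]
    exact congrArg _ (Multiset.map_congr rfl (fun a _ => by simp))
  have hevalF : ∀ w : ℂ, ‖F.eval w‖
      = ‖B.eval w‖ * (N.map fun a => ‖(t:ℂ)^2 - (starRingEnd ℂ) a * w‖).prod := by
    intro w
    rw [hFdef, eval_mul, norm_mul, eval_multiset_prod]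
    congr 1
    rw [Multiset.map_map, norm_mprod, Multiset.map_map]
    exact congrArg _ (Multiset.map_congr rfl (fun a _ => by simp))
  -- on the sphere of radius t
  have key1 : ∀ w : ℂ, ‖w‖ = t → ‖F.eval w‖ = t ^ k * ‖Q.eval w‖ := by
    intro w hw
    rw [hevalF, hevalQ]
    have hpt : ∀ a : ℂ, ‖(t:ℂ)^2 - (starRingEnd ℂ) a * w‖ = t * ‖w - a‖ := by
      intro a
      have h1 : (t:ℂ)^2 - (starRingEnd ℂ) a * w = w * (starRingEnd ℂ) (w - a) := by
        have h2 : w * (starRingEnd ℂ) w = ((t:ℝ):ℂ)^2 := by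
          rw [Complex.mul_conj, Complex.normSq_eq_norm_sq, ← hw]
          push_cast
          ring
        rw [map_sub, mul_sub, h2]
        ring
      rw [h1, norm_mul, RingHomIsometric.norm_map, norm_sub_rev, hw]
    have : (N.map fun a => ‖(t:ℂ)^2 - (starRingEnd ℂ) a * w‖)
        = N.map fun a => t * ‖w - a‖ := by
      apply Multiset.map_congr rfl
      intro a _; exact hpt a
    rw [this]
    have : (N.map fun a => t * ‖w - a‖).prod
        = t ^ k * (N.map fun a => ‖w - a‖).prod := by
      rw [show (fun a : ℂ => t * ‖w - a‖) = fun a : ℂ => (fun _ => t) a * ‖w - a‖ from rfl]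
      rw [Multiset.prod_map_mul]
      simp [hkdef]
    rw [this]; ring
  -- maximum modulus
  have hfr : ∀ w ∈ frontier (Metric.ball (0:ℂ) t), ‖F.eval w‖ ≤ t ^ k * (M / (1 - t)) := by
    intro w hwf
    rw [frontier_ball (0:ℂ) (ne_of_gt ht0)] at hwf
    have hw : ‖w‖ = t := by simpa using hwf
    rw [key1 w hw]
    exact mul_le_mul_of_nonneg_left
      (eval_norm_le Q M t hM0 hM ht0.le ht w hw.le) (by positivity)
  have hmax : ‖F.eval 0‖ ≤ t ^ k * (M / (1 - t)) := by
    refine Complex.norm_le_of_forall_mem_frontier_norm_le Metric.isBounded_ball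
      ((F.differentiable).diffContOnCl) hfr ?_
    exact subset_closure (Metric.mem_ball_self ht0)
  -- value at 0
  have hF0 : ‖F.eval 0‖ = ‖B.eval 0‖ * (t^2) ^ k := by
    rw [hevalF]
    congr 1
    have : (N.map fun a => ‖(t:ℂ)^2 - (starRingEnd ℂ) a * (0:ℂ)‖)
        = N.map fun _ => t^2 := by
      apply Multiset.map_congr rfl
      intro a _
      rw [mul_zero, sub_zero, norm_pow, Complex.norm_real, Real.norm_eq_abs, abs_of_pos ht0]
    rw [this]
    simp [hkdef]
  have hQ0e : Q.eval 0 = Q.coeff 0 := by simp [Polynomial.eval_zero, Polynomial.coeff_zero_eq_eval_zero]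
  have hB0 : d ≤ s ^ k * ‖B.eval 0‖ := by
    have h1 := hevalQ 0
    rw [hQ0e] at h1
    have h2 : (N.map fun a => ‖(0:ℂ) - a‖).prod ≤ s ^ k := by
      have := mprod_le (N.map fun a => ‖(0:ℂ) - a‖) s
        (by intro x hx; obtain ⟨a, _, rfl⟩ := Multiset.mem_map.1 hx; exact norm_nonneg _)
        (by intro x hx; obtain ⟨a, ha, rfl⟩ := Multiset.mem_map.1 hx
            rw [zero_sub, norm_neg]
            exact (Multiset.mem_filter.1 ha).2)
      simpa [hkdef] using this
    calc d ≤ ‖Q.coeff 0‖ := hdc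
      _ = (N.map fun a => ‖(0:ℂ) - a‖).prod * ‖B.eval 0‖ := h1
      _ ≤ s ^ k * ‖B.eval 0‖ := by
          exact mul_le_mul_of_nonneg_right h2 (norm_nonneg _)
  -- combine
  have hcomb : d / s ^ k * (t^2) ^ k ≤ t ^ k * (M / (1 - t)) := by
    refine le_trans ?_ hmax
    rw [hF0]
    have : d / s ^ k ≤ ‖B.eval 0‖ := by
      rw [div_le_iff₀ (by positivity)]
      linarith [hB0, mul_comm (s ^ k) ‖B.eval 0‖]
    exact mul_le_mul_of_nonneg_right this (by positivity)
  have hts : (t / s) ^ k = (t^2)^k / (s ^ k * t ^ k) := by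
    rw [div_pow]
    field_simp
    ring
  have h1 : d * ((t^2)^k/(s^k*t^k)) = (d/s^k*(t^2)^k)/t^k := by
    field_simp
  rw [hts, h1, div_le_iff₀ (pow_pos ht0 k)]
  calc d / s^k * (t^2)^k ≤ t^k * (M/(1-t)) := hcomb
    _ = M / (1-t) * t^k := mul_comm _ _

end PolyCoverAux

set_option maxHeartbeats 1000000 in
open Polynomial in
/-- **Lemma 3.4.** Let `𝒟 ⊆ ℂ` be finite with `0 ∈ 𝒟`, `𝒟 ≠ {0}`, and let
`d* = min {|a| : a ∈ 𝒟, a ≠ 0}`. For every `r ∈ (0,1)` there is `k_r ≥ 1` such that for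
every `n`, every nonzero polynomial `P` of degree `≤ n` with coefficients in `𝒟`, every
`ρ ∈ (0,r)` and every `ε > 0`, the set `{λ : ρ < |λ| < r, |P(λ)| < εⁿ}` can be covered by
at most `k_r` closed disks of radius `d*^{-1/k_r} (2ε/(ρ(1-r)))^{n/k_r}`. -/
theorem polynomial_small_value_cover (D : Finset ℂ) (h0 : (0 : ℂ) ∈ D)
    (hne : ∃ d ∈ D, d ≠ 0)
    (dstar : ℝ) (hdstar : IsLeast {x : ℝ | ∃ d ∈ D, d ≠ 0 ∧ ‖d‖ = x} dstar)
    (r : ℝ) (hr0 : 0 < r) (hr1 : r < 1) :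
    ∃ kr : ℕ, 1 ≤ kr ∧
      ∀ (n : ℕ) (P : Polynomial ℂ), P ≠ 0 → P.natDegree ≤ n → (∀ j, P.coeff j ∈ D) →
        ∀ ρ : ℝ, 0 < ρ → ρ < r → ∀ ε : ℝ, 0 < ε →
          ∃ s : Finset ℂ, s.card ≤ kr ∧
            {z : ℂ | ρ < ‖z‖ ∧ ‖z‖ < r ∧ ‖P.eval z‖ < ε ^ n} ⊆
              ⋃ c ∈ s, Metric.closedBall c
                (dstar ^ (-(1 : ℝ) / kr) * (2 * ε / (ρ * (1 - r))) ^ ((n : ℝ) / kr)) := by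
  classical
  obtain ⟨d₀, hd₀D, hd₀ne, hd₀norm⟩ := hdstar.1
  have hdpos : 0 < dstar := by rw [← hd₀norm]; exact norm_pos_iff.2 hd₀ne
  set M : ℝ := D.sup' ⟨0, h0⟩ (fun x => ‖x‖) with hMdef
  have hMD : ∀ x ∈ D, ‖x‖ ≤ M := fun x hx => Finset.le_sup' _ hx
  set s : ℝ := (1 + r) / 2 with hsdef
  set t : ℝ := (3 + r) / 4 with htdef
  have hs : 0 < s := by rw [hsdef]; linarith
  have hst : s < t := by rw [hsdef, htdef]; linarith
  have ht : t < 1 := by rw [htdef]; linarith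
  have hts1 : 1 < t / s := (one_lt_div hs).2 hst
  obtain ⟨K, hK⟩ := pow_unbounded_of_one_lt (M / ((1 - t) * dstar)) hts1
  refine ⟨K + 1, le_add_self, ?_⟩
  intro n P hP hdeg hcoef ρ hρ0 hρr ε hε
  set kr : ℕ := K + 1 with hkrdef
  -- the near-root count bound
  set q1 : ℂ → Prop := fun z => z ≠ 0 ∧ ‖z‖ ≤ s with hq1def
  have hcount : Multiset.card (P.roots.filter q1) ≤ K := by
    set m := P.natTrailingDegree with hmdef
    have hXdvd : (X : ℂ[X]) ^ m ∣ P :=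
      Polynomial.X_pow_dvd_iff.2 fun d hd => Polynomial.coeff_eq_zero_of_lt_natTrailingDegree hd
    obtain ⟨Q, hPQ⟩ := hXdvd
    have hQcoeff : ∀ j, Q.coeff j = P.coeff (j + m) := by
      intro j
      rw [hPQ, Polynomial.coeff_X_pow_mul]
    have hQ0 : Q.coeff 0 ≠ 0 := by
      rw [hQcoeff 0, zero_add]
      exact Polynomial.trailingCoeff_nonzero_iff_nonzero.2 hP
    have hQD : ∀ j, Q.coeff j ∈ D := fun j => hQcoeff j ▸ hcoef (j + m)
    have hQd : dstar ≤ ‖Q.coeff 0‖ := hdstar.2 ⟨Q.coeff 0, hQD 0, hQ0, rfl⟩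
    have hQM : ∀ j, ‖Q.coeff j‖ ≤ M := fun j => hMD _ (hQD j)
    have hroots : P.roots = Multiset.replicate m 0 + Q.roots := by
      rw [hPQ, Polynomial.roots_mul (hPQ ▸ hP), Polynomial.roots_pow, Polynomial.roots_X]
      rw [Multiset.nsmul_singleton]
    have hfilt : P.roots.filter q1 ≤ Q.roots.filter (fun z => ‖z‖ ≤ s) := by
      rw [hroots, Multiset.filter_add]
      have h1 : (Multiset.replicate m (0:ℂ)).filter q1 = 0 := by
        rw [Multiset.filter_eq_nil]
        intro a ha hq
        exact hq.1 (Multiset.eq_of_mem_replicate ha)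
      rw [h1, zero_add]
      exact Multiset.monotone_filter_right _ (fun z hz => hz.2)
    have hle := root_count Q hQ0 M dstar s t hdpos hQd hQM hs hst ht
    by_contra hcon
    push_neg at hcon
    have h2 : Multiset.card (P.roots.filter q1) ≤ Multiset.card (Q.roots.filter (fun z => ‖z‖ ≤ s)) :=
      Multiset.card_le_card hfilt
    have h3 : (t/s) ^ K < (t/s) ^ (Multiset.card (Q.roots.filter (fun z => ‖z‖ ≤ s))) := by
      apply pow_lt_pow_right₀ hts1
      omega
    have h4 : (t/s) ^ (Multiset.card (Q.roots.filter (fun z => ‖z‖ ≤ s))) ≤ M / ((1-t) * dstar) := by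
      rw [le_div_iff₀ (mul_pos (by linarith : (0:ℝ) < 1 - t) hdpos)]
      calc (t/s) ^ _ * ((1-t)*dstar) = dstar * (t/s)^_ * (1-t) := by ring
        _ ≤ (M / (1-t)) * (1-t) := by
            exact mul_le_mul_of_nonneg_right hle (by linarith)
        _ = M := div_mul_cancel₀ M (by linarith : (1:ℝ) - t ≠ 0)
    linarith
  -- endgame
  set y : ℝ := 2 * ε / (ρ * (1 - r)) with hydef
  have hy : 0 < y := by
    rw [hydef]; exact div_pos (by linarith) (mul_pos hρ0 (by linarith))
  set Xv : ℝ := dstar⁻¹ * y ^ n with hXdef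
  have hX0 : 0 < Xv := mul_pos (inv_pos.2 hdpos) (pow_pos hy n)
  have hRX : dstar ^ (-(1:ℝ)/(kr:ℝ)) * y ^ ((n:ℝ)/(kr:ℝ)) = Xv ^ ((1:ℝ)/(kr:ℝ)) := by
    rw [hXdef, Real.mul_rpow (inv_nonneg.2 hdpos.le) (pow_nonneg hy.le n)]
    congr 1
    · rw [Real.inv_rpow hdpos.le, ← Real.rpow_neg hdpos.le, neg_div]
    · rw [← Real.rpow_natCast y n, ← Real.rpow_mul hy.le, mul_one_div]
  by_cases hX1 : 1 ≤ Xv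
  · refine ⟨{0}, by simp [hkrdef], ?_⟩
    intro z hz
    simp only [Set.mem_setOf_eq] at hz
    have h1 : (1:ℝ) ≤ Xv ^ ((1:ℝ)/(kr:ℝ)) := Real.one_le_rpow hX1 (by positivity)
    simp only [Set.mem_iUnion, Metric.mem_closedBall, Finset.mem_singleton, exists_prop]
    refine ⟨0, rfl, ?_⟩
    rw [dist_zero_right, hRX]
    linarith [hz.2.1]
  · push_neg at hX1
    set S : Finset ℂ := (P.roots.filter q1).toFinset with hSdef
    refine ⟨S, ?_, ?_⟩
    · calc S.card ≤ Multiset.card (P.roots.filter q1) := Multiset.toFinset_card_le _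
        _ ≤ K := hcount
        _ ≤ kr := by omega
    intro z hz
    simp only [Set.mem_setOf_eq] at hz
    obtain ⟨hz1, hz2, hz3⟩ := hz
    by_contra hzn
    simp only [Set.mem_iUnion, Metric.mem_closedBall, not_exists, not_le, exists_prop,
      not_and] at hzn
    -- lower bound for |P(z)|
    have hsplit : P = C P.leadingCoeff * (P.roots.map fun a => X - C a).prod :=
      (Polynomial.C_leadingCoeff_mul_prod_multiset_X_sub_C IsAlgClosed.card_roots_eq_natDegree).symm
    have hpev : ‖P.eval z‖ = ‖P.leadingCoeff‖ * (P.roots.map fun a => ‖z - a‖).prod := by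
      conv_lhs => rw [hsplit]
      rw [eval_mul, norm_mul, eval_C, eval_multiset_prod, Multiset.map_map, norm_mprod,
        Multiset.map_map]
      exact congrArg _ (congrArg _ (Multiset.map_congr rfl fun a _ => by simp))
    have hsplit2 : P.roots = P.roots.filter q1 + P.roots.filter (fun x => ¬ q1 x) :=
      (Multiset.filter_add_not _ _).symm
    have hprodsplit : (P.roots.map fun a => ‖z - a‖).prod
        = ((P.roots.filter q1).map fun a => ‖z - a‖).prod *
          ((P.roots.filter (fun x => ¬ q1 x)).map fun a => ‖z - a‖).prod := by
      conv_lhs => rw [hsplit2]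
      rw [Multiset.map_add, Multiset.prod_add]
    set c0 : ℝ := ρ * (1 - r) / 2 with hc0def
    have hc0pos : 0 < c0 := by rw [hc0def]; exact div_pos (mul_pos hρ0 (by linarith)) two_pos
    have hc0le1 : c0 ≤ 1 := by rw [hc0def]; nlinarith
    have hc0ρ : c0 ≤ ρ := by rw [hc0def]; nlinarith
    have hRpos : 0 < Xv ^ ((1:ℝ)/(kr:ℝ)) := Real.rpow_pos_of_pos hX0 _
    -- near product
    have hnear : Xv ≤ ((P.roots.filter q1).map fun a => ‖z - a‖).prod := by
      have hk' : Multiset.card (P.roots.filter q1) ≤ kr := hcount.trans (by omega)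
      have h1 : (Xv ^ ((1:ℝ)/(kr:ℝ))) ^ (Multiset.card ((P.roots.filter q1).map fun a => ‖z - a‖))
          ≤ ((P.roots.filter q1).map fun a => ‖z - a‖).prod := by
        apply mprod_ge _ _ hRpos.le
        intro x hx
        obtain ⟨a, ha, rfl⟩ := Multiset.mem_map.1 hx
        have := hzn a (Multiset.mem_toFinset.2 ha)
        rw [dist_eq_norm, hRX] at this
        exact this.le
      rw [Multiset.card_map] at h1
      refine le_trans ?_ h1
      rw [← Real.rpow_natCast (Xv ^ ((1:ℝ)/(kr:ℝ))) _, ← Real.rpow_mul hX0.le]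
      calc Xv = Xv ^ (1:ℝ) := (Real.rpow_one _).symm
        _ ≤ Xv ^ ((1:ℝ)/(kr:ℝ) * (Multiset.card (P.roots.filter q1) : ℝ)) := by
            apply Real.rpow_le_rpow_of_exponent_ge hX0 hX1.le
            rw [one_div, inv_mul_le_iff₀ (by positivity : (0:ℝ) < (kr:ℝ)), mul_one]
            exact_mod_cast hk'
    -- far/zero product
    have hrest : c0 ^ n ≤ ((P.roots.filter (fun x => ¬ q1 x)).map fun a => ‖z - a‖).prod := by
      have h1 : c0 ^ (Multiset.card ((P.roots.filter (fun x => ¬ q1 x)).map fun a => ‖z - a‖))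
          ≤ ((P.roots.filter (fun x => ¬ q1 x)).map fun a => ‖z - a‖).prod := by
        apply mprod_ge _ _ hc0pos.le
        intro x hx
        obtain ⟨a, ha, rfl⟩ := Multiset.mem_map.1 hx
        have ha2 : ¬(a ≠ 0 ∧ ‖a‖ ≤ s) := (Multiset.mem_filter.1 ha).2
        push_neg at ha2
        by_cases ha0 : a = 0
        · rw [ha0, sub_zero]
          linarith
        · have hsa : s < ‖a‖ := ha2 ha0
          have h3 : ‖a‖ - ‖z‖ ≤ ‖z - a‖ := by
            rw [norm_sub_rev]
            exact norm_sub_norm_le a z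
          have : (1 - r)/2 ≤ ‖z - a‖ := by
            rw [hsdef] at hsa
            linarith
          rw [hc0def]
          nlinarith
      rw [Multiset.card_map] at h1
      refine le_trans (pow_le_pow_of_le_one hc0pos.le hc0le1 ?_) h1
      calc Multiset.card (P.roots.filter (fun x => ¬ q1 x)) ≤ Multiset.card P.roots :=
            Multiset.card_le_card (Multiset.filter_le _ _)
        _ ≤ P.natDegree := Polynomial.card_roots' P
        _ ≤ n := hdeg
    have hlead : dstar ≤ ‖P.leadingCoeff‖ :=
      hdstar.2 ⟨P.leadingCoeff, hcoef P.natDegree, Polynomial.leadingCoeff_ne_zero.2 hP, rfl⟩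
    have hyc : y * c0 = ε := by
      have h1 : ρ * (1 - r) * 2 ≠ 0 :=
        mul_ne_zero (mul_ne_zero (ne_of_gt hρ0) (by linarith)) two_ne_zero
      rw [hydef, hc0def, div_mul_div_comm, div_eq_iff h1]
      ring
    have hfin : ε ^ n ≤ ‖P.eval z‖ := by
      rw [hpev, hprodsplit]
      calc ε ^ n = dstar * Xv * c0 ^ n := by
            rw [hXdef, ← hyc, mul_pow]
            rw [show dstar * (dstar⁻¹ * y ^ n) * c0 ^ n = dstar * dstar⁻¹ * (y ^ n * c0 ^ n) by ring,
              mul_inv_cancel₀ (ne_of_gt hdpos), one_mul]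
        _ ≤ ‖P.leadingCoeff‖ * (((P.roots.filter q1).map fun a => ‖z - a‖).prod * c0 ^ n) := by
            rw [mul_assoc]
            apply mul_le_mul hlead (mul_le_mul_of_nonneg_right hnear (by positivity))
              (by positivity) (norm_nonneg _)
        _ ≤ ‖P.leadingCoeff‖ * ((P.roots.filter q1).map fun a => ‖z - a‖).prod *
              ((P.roots.filter (fun x => ¬ q1 x)).map fun a => ‖z - a‖).prod := by
            have hp1 : (0:ℝ) ≤ ((P.roots.filter q1).map fun a => ‖z - a‖).prod := by
              apply mprod_nonneg
              intro x hx
              obtain ⟨a, _, rfl⟩ := Multiset.mem_map.1 hx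
              exact norm_nonneg _
            rw [← mul_assoc]
            exact mul_le_mul_of_nonneg_left hrest (mul_nonneg (norm_nonneg _) hp1)
        _ = ‖P.leadingCoeff‖ * (((P.roots.filter q1).map fun a => ‖z - a‖).prod *
              ((P.roots.filter (fun x => ¬ q1 x)).map fun a => ‖z - a‖).prod) := by ring
    linarith
end
end

section
/- Let 𝒟 be a finite subset of ℂ containing at least one nonzero element. For every r ∈ (0,1) there exists k_r ∈ ℕ such that every power series f(z) = ∑_{j=0}^∞ a_j z^j with a_j ∈ 𝒟 for all j and a_0 ≠ 0 (such a series converges on the open unit disk, since its coefficients are bounded) has at most k_r zeros, counted with multiplicity, in the closed disk {z ∈ ℂ : |z| ≤ (r+1)/2}. -/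
open MeasureTheory Set Filter Metric
open scoped ENNReal NNReal Topology

noncomputable section

open Classical in
/-- Order of vanishing of `f` at `z` (junk value `0` if `f` is not analytic at `z`). -/
def zeroOrder (f : ℂ → ℂ) (z : ℂ) : ℕ∞ :=
  if h : AnalyticAt ℂ f z then analyticOrderAt f z else 0


section Aux

open Complex

/-- Two functions continuous at a point of `ℂ` that agree on a punctured
neighborhood agree at the point. -/
lemma eq_at_of_eventuallyEq_punctured {f g : ℂ → ℂ} {z₀ : ℂ}
    (hf : ContinuousAt f z₀) (hg : ContinuousAt g z₀)
    (h : ∀ᶠ z in 𝓝[≠] z₀, f z = g z) : f z₀ = g z₀ := by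
  have h1 : Tendsto f (𝓝[≠] z₀) (𝓝 (f z₀)) := hf.continuousWithinAt.tendsto
  have h2 : Tendsto g (𝓝[≠] z₀) (𝓝 (g z₀)) := hg.continuousWithinAt.tendsto
  have h3 : Tendsto f (𝓝[≠] z₀) (𝓝 (g z₀)) := h2.congr' (h.mono fun z hz => hz.symm)
  exact tendsto_nhds_unique h1 h3

lemma le_zeroOrder_iff {f : ℂ → ℂ} {z₀ : ℂ} (hf : AnalyticAt ℂ f z₀) (k : ℕ) :
    (k : ℕ∞) ≤ zeroOrder f z₀ ↔
      ∃ g : ℂ → ℂ, AnalyticAt ℂ g z₀ ∧ ∀ᶠ z in 𝓝 z₀, f z = (z - z₀) ^ k * g z := by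
  rw [zeroOrder, dif_pos hf]
  constructor
  · intro h
    by_cases htop : analyticOrderAt f z₀ = ⊤
    · refine ⟨0, analyticAt_const, ?_⟩
      filter_upwards [analyticOrderAt_eq_top.mp htop] with z hz
      simp [hz]
    · obtain ⟨n, hn⟩ := WithTop.ne_top_iff_exists.mp htop
      obtain ⟨g, hg, _, hev⟩ := (hf.analyticOrderAt_eq_natCast (n := n)).mp hn.symm
      have hkn : k ≤ n := by
        rw [← hn] at h; exact WithTop.coe_le_coe.mp h
      refine ⟨fun z => (z - z₀) ^ (n - k) * g z,
        ((analyticAt_id.sub analyticAt_const).pow _).mul hg, ?_⟩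
      filter_upwards [hev] with z hz
      rw [hz, smul_eq_mul, ← mul_assoc, ← pow_add]
      congr 2
      omega
  · rintro ⟨g, hg, hfg⟩
    by_cases htop : analyticOrderAt g z₀ = ⊤
    · have : ∀ᶠ z in 𝓝 z₀, f z = 0 := by
        filter_upwards [hfg, analyticOrderAt_eq_top.mp htop] with z h1 h2
        simp [h1, h2]
      rw [analyticOrderAt_eq_top.mpr this]
      exact le_top
    · obtain ⟨m, hm⟩ := WithTop.ne_top_iff_exists.mp htop
      obtain ⟨h, hh, hh0, hev⟩ := (hg.analyticOrderAt_eq_natCast (n := m)).mp hm.symm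
      have : analyticOrderAt f z₀ = (↑(k + m) : ℕ∞) := by
        rw [hf.analyticOrderAt_eq_natCast]
        refine ⟨h, hh, hh0, ?_⟩
        filter_upwards [hfg, hev] with z h1 h2
        rw [h1, h2, smul_eq_mul, smul_eq_mul, pow_add, mul_assoc]
      rw [this]
      exact_mod_cast Nat.le_add_right k m

lemma analyticOnNhd_dslope {f : ℂ → ℂ} {z₀ : ℂ}
    (hf : AnalyticOnNhd ℂ f (ball (0:ℂ) 1)) (hz₀ : z₀ ∈ ball (0:ℂ) 1) :
    AnalyticOnNhd ℂ (dslope f z₀) (ball (0:ℂ) 1) := by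
  intro z hz
  by_cases h : z = z₀
  · subst h
    obtain ⟨p, hp⟩ := hf z hz
    exact ⟨p.fslope, hp.has_fpower_series_dslope_fslope⟩
  · have h1 : AnalyticAt ℂ (fun w => (w - z₀)⁻¹ • (f w - f z₀)) z :=
      (((analyticAt_id.sub analyticAt_const).inv (sub_ne_zero.mpr h))).smul
        ((hf z hz).sub analyticAt_const)
    exact h1.congr (dslope_eventuallyEq_slope_of_ne f h).symm

/-- Key inductive lemma: Blaschke-factor peeling. -/
lemma key_peel (ρ R M : ℝ) (hρ : 0 < ρ) (hρR : ρ < R) (hR1 : R < 1) (hM : 0 ≤ M) :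
    ∀ (m : ℕ) (f : ℂ → ℂ), AnalyticOnNhd ℂ f (ball (0:ℂ) 1) →
      (∀ z ∈ sphere (0:ℂ) R, ‖f z‖ ≤ M) →
      ∀ (s : Finset ℂ) (n : ℂ → ℕ),
        (∀ z ∈ s, z ∈ closedBall (0:ℂ) ρ ∧ (n z : ℕ∞) ≤ zeroOrder f z) →
        (m ≤ ∑ z ∈ s, n z) →
        ‖f 0‖ ≤ M * (ρ / R) ^ m := by
  have hR0 : 0 < R := hρ.trans hρR
  intro m
  induction m with
  | zero =>
    intro f hf hsp s n _ _
    rw [pow_zero, mul_one]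
    have hd : DiffContOnCl ℂ f (ball (0:ℂ) R) := by
      constructor
      · exact (hf.differentiableOn).mono (ball_subset_ball hR1.le)
      · rw [closure_ball (0:ℂ) hR0.ne']
        exact hf.continuousOn.mono
          (fun z hz => lt_of_le_of_lt (mem_closedBall_zero_iff.mp hz) hR1 |> mem_ball_zero_iff.mpr)
    have := Complex.norm_le_of_forall_mem_frontier_norm_le (isBounded_ball) hd
      (fun z hz => hsp z (by rwa [frontier_ball (0:ℂ) hR0.ne'] at hz))
      (show (0:ℂ) ∈ closure (ball (0:ℂ) R) by
        rw [closure_ball (0:ℂ) hR0.ne']; exact mem_closedBall_self hR0.le)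
    exact this
  | succ m ih =>
    intro f hf hsp s n hs hsum
    -- find a point with positive multiplicity
    have hex : ∃ z₀ ∈ s, 0 < n z₀ := by
      by_contra hc
      push_neg at hc
      have : ∑ z ∈ s, n z = 0 := Finset.sum_eq_zero (fun z hz => by
        have := hc z hz; omega)
      omega
    obtain ⟨z₀, hz₀s, hn₀⟩ := hex
    have hz₀cb : z₀ ∈ closedBall (0:ℂ) ρ := (hs z₀ hz₀s).1
    have hz₀ρ : ‖z₀‖ ≤ ρ := mem_closedBall_zero_iff.mp hz₀cb
    have hz₀1 : z₀ ∈ ball (0:ℂ) 1 :=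
      mem_ball_zero_iff.mpr (lt_of_le_of_lt hz₀ρ (hρR.trans hR1))
    have hAz₀ : AnalyticAt ℂ f z₀ := hf z₀ hz₀1
    -- f z₀ = 0
    have hord : (1 : ℕ∞) ≤ zeroOrder f z₀ :=
      le_trans (by exact_mod_cast Nat.one_le_iff_ne_zero.mpr hn₀.ne') (hs z₀ hz₀s).2
    have hfz₀ : f z₀ = 0 := by
      obtain ⟨g, _, hev⟩ := (le_zeroOrder_iff hAz₀ 1).mp hord
      have := hev.self_of_nhds
      simpa using this
    by_cases hz0 : z₀ = 0
    · have : f 0 = 0 := hz0 ▸ hfz₀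
      rw [this, norm_zero]
      positivity
    -- the Blaschke-modified peeled function
    set B : ℂ → ℂ := fun z => ((R:ℂ) ^ 2 - (starRingEnd ℂ) z₀ * z) * (R:ℂ)⁻¹ with hB
    have hBanal : ∀ z : ℂ, AnalyticAt ℂ B z := fun z =>
      ((analyticAt_const.sub (analyticAt_const.mul analyticAt_id)).mul analyticAt_const)
    set g : ℂ → ℂ := fun z => dslope f z₀ z * B z with hg
    have hganal : AnalyticOnNhd ℂ g (ball (0:ℂ) 1) :=
      fun z hz => ((analyticOnNhd_dslope hf hz₀1) z hz).mul (hBanal z)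
    -- norm of B on the sphere
    have hRC : (R:ℂ) ≠ 0 := by exact_mod_cast hR0.ne'
    have hBval : ∀ z : ℂ, ‖z‖ = R → B z = (starRingEnd ℂ) (z - z₀) * z * (R:ℂ)⁻¹ := by
      intro z hzR
      have hzz : (z : ℂ) * (starRingEnd ℂ) z = ((R:ℂ))^2 := by
        rw [Complex.mul_conj, Complex.normSq_eq_norm_sq, hzR]
        push_cast
        ring
      rw [hB]
      simp only [map_sub]
      rw [← hzz]
      ring
    have hBsp : ∀ z : ℂ, ‖z‖ = R → ‖B z‖ = ‖z - z₀‖ := by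
      intro z hzR
      rw [hBval z hzR, norm_mul, norm_mul, RCLike.norm_conj, hzR, norm_inv,
        Complex.norm_real, Real.norm_of_nonneg hR0.le]
      field_simp
    -- bound for g on the sphere
    have hgsp : ∀ z ∈ sphere (0:ℂ) R, ‖g z‖ ≤ M := by
      intro z hz
      rw [mem_sphere_zero_iff_norm] at hz
      have hzne : z ≠ z₀ := by
        intro h
        rw [h] at hz
        exact absurd hz.symm.le (not_le.mpr (lt_of_le_of_lt hz₀ρ hρR))
      have hds : dslope f z₀ z = f z / (z - z₀) := by
        rw [dslope_of_ne f hzne, slope_def_field, hfz₀, sub_zero]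
      have hzsub : (0:ℝ) < ‖z - z₀‖ := norm_pos_iff.mpr (sub_ne_zero.mpr hzne)
      have : ‖g z‖ = ‖f z‖ := by
        show ‖dslope f z₀ z * B z‖ = ‖f z‖
        rw [hds, norm_mul, norm_div, hBsp z hz]
        rw [div_mul_cancel₀ _ (ne_of_gt hzsub)]
      rw [this]
      exact hsp z (mem_sphere_zero_iff_norm.mpr hz)
    -- relating f 0 and g 0
    have hz₀pos : 0 < ‖z₀‖ := norm_pos_iff.mpr hz0
    have hg0 : ‖g 0‖ = ‖z₀‖⁻¹ * ‖f 0‖ * R := by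
      have hds : dslope f z₀ 0 = f 0 / (0 - z₀) := by
        rw [dslope_of_ne f (Ne.symm hz0), slope_def_field, hfz₀, sub_zero]
      have hB0 : B 0 = (R:ℂ) := by
        show ((R:ℂ) ^ 2 - (starRingEnd ℂ) z₀ * 0) * (R:ℂ)⁻¹ = (R:ℂ)
        field_simp
        ring
      show ‖dslope f z₀ 0 * B 0‖ = ‖z₀‖⁻¹ * ‖f 0‖ * R
      rw [hds, hB0, norm_mul, norm_div, zero_sub, norm_neg, Complex.norm_real,
        Real.norm_of_nonneg hR0.le]
      ring
    have hf0g : ‖f 0‖ ≤ (ρ / R) * ‖g 0‖ := by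
      rw [hg0]
      rw [div_mul_eq_mul_div, le_div_iff₀ hR0]
      have h1 : ‖f 0‖ * R = (‖z₀‖⁻¹ * ‖f 0‖ * R) * ‖z₀‖ := by
        field_simp
      calc ‖f 0‖ * R = (‖z₀‖⁻¹ * ‖f 0‖ * R) * ‖z₀‖ := h1
        _ ≤ (‖z₀‖⁻¹ * ‖f 0‖ * R) * ρ := by
            apply mul_le_mul_of_nonneg_left hz₀ρ
            positivity
        _ = ρ * (‖z₀‖⁻¹ * ‖f 0‖ * R) := by ring
    -- new multiplicity function
    set n' : ℂ → ℕ := Function.update n z₀ (n z₀ - 1) with hn'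
    have hs' : ∀ z ∈ s, z ∈ closedBall (0:ℂ) ρ ∧ (n' z : ℕ∞) ≤ zeroOrder g z := by
      intro z hzs
      refine ⟨(hs z hzs).1, ?_⟩
      have hz1 : z ∈ ball (0:ℂ) 1 :=
        mem_ball_zero_iff.mpr
          (lt_of_le_of_lt (mem_closedBall_zero_iff.mp (hs z hzs).1) (hρR.trans hR1))
      by_cases hzz : z = z₀
      · subst hzz
        obtain ⟨h, hh, hev⟩ := (le_zeroOrder_iff (hf z hz1) (n z)).mp (hs z hzs).2
        rw [le_zeroOrder_iff (hganal z hz1) (n' z)]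
        refine ⟨fun w => h w * B w, hh.mul (hBanal z), ?_⟩
        have hpunct : ∀ᶠ w in 𝓝[≠] z, g w = (w - z) ^ (n' z) * (h w * B w) := by
          filter_upwards [eventually_nhdsWithin_of_eventually_nhds hev,
            self_mem_nhdsWithin] with w hw hwne
          have hwz : w - z ≠ 0 := sub_ne_zero.mpr hwne
          show dslope f z w * B w = _
          rw [dslope_of_ne f hwne, slope_def_field, hfz₀, sub_zero, hw]
          rw [hn', Function.update_self]
          have hnz : n z = (n z - 1) + 1 := by omega
          rw [hnz, pow_succ]
          simp only [Nat.add_sub_cancel]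
          field_simp
        have hat : g z = (z - z) ^ (n' z) * (h z * B z) := by
          apply eq_at_of_eventuallyEq_punctured ((hganal z hz1).continuousAt)
            ((((analyticAt_id.sub analyticAt_const).pow _).mul
              (hh.mul (hBanal z))).continuousAt) hpunct
        rw [eventually_nhdsWithin_iff] at hpunct
        filter_upwards [hpunct] with w hw
        by_cases hwz : w = z
        · rw [hwz]; exact hat
        · exact hw hwz
      · rw [hn', Function.update_of_ne hzz]
        obtain ⟨h, hh, hev⟩ := (le_zeroOrder_iff (hf z hz1) (n z)).mp (hs z hzs).2
        rw [le_zeroOrder_iff (hganal z hz1) (n z)]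
        refine ⟨fun w => (w - z₀)⁻¹ * h w * B w,
          (((analyticAt_id.sub analyticAt_const).inv (sub_ne_zero.mpr hzz)).mul hh).mul
            (hBanal z), ?_⟩
        filter_upwards [hev, eventually_ne_nhds hzz] with w hw hwne
        have hwz : w - z₀ ≠ 0 := sub_ne_zero.mpr hwne
        show dslope f z₀ w * B w = _
        rw [dslope_of_ne f hwne, slope_def_field, hfz₀, sub_zero, hw]
        field_simp
    have hsum' : m ≤ ∑ z ∈ s, n' z := by
      have e1 : ∑ z ∈ s, n' z = (n z₀ - 1) + ∑ z ∈ s \ {z₀}, n z :=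
        Finset.sum_update_of_mem hz₀s n (n z₀ - 1)
      have e2 : ∑ z ∈ s, n z = n z₀ + ∑ z ∈ s \ {z₀}, n z := by
        rw [← Finset.add_sum_erase s n hz₀s, Finset.erase_eq]
      omega
    have hgbound : ‖g 0‖ ≤ M * (ρ / R) ^ m := ih g hganal hgsp s n' hs' hsum'
    calc ‖f 0‖ ≤ (ρ / R) * ‖g 0‖ := hf0g
      _ ≤ (ρ / R) * (M * (ρ / R) ^ m) := by
          apply mul_le_mul_of_nonneg_left hgbound
          positivity
      _ = M * (ρ / R) ^ (m + 1) := by ring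

end Aux

/-- **Uniform bound on zeros of power series with coefficients in a finite set.**
Let `𝒟 ⊆ ℂ` be finite with a nonzero element. For every `r ∈ (0,1)` there is `k_r` such
that every power series `f(z) = ∑ aⱼ zʲ` with `aⱼ ∈ 𝒟` and `a₀ ≠ 0` has at most `k_r`
zeros, counted with multiplicity, in the closed disk of radius `(r+1)/2`. -/
theorem power_series_zeros_bound (D : Finset ℂ) (hne : ∃ d ∈ D, d ≠ 0)
    (r : ℝ) (hr0 : 0 < r) (hr1 : r < 1) :
    ∃ kr : ℕ,
      ∀ a : ℕ → ℂ, (∀ j, a j ∈ D) → a 0 ≠ 0 →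
        ∀ s : Finset ℂ,
          (∀ z ∈ s, ‖z‖ ≤ (r + 1) / 2 ∧ (∑' j : ℕ, a j * z ^ j) = 0) →
          (∑ z ∈ s, zeroOrder (fun w => ∑' j : ℕ, a j * w ^ j) z) ≤ (kr : ℕ∞) := by
  set ρ : ℝ := (r + 1) / 2 with hρdef
  set R : ℝ := (r + 3) / 4 with hRdef
  have hρ0 : 0 < ρ := by rw [hρdef]; linarith
  have hρR : ρ < R := by rw [hρdef, hRdef]; linarith
  have hR1 : R < 1 := by rw [hRdef]; linarith
  have hR0 : 0 < R := hρ0.trans hρR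
  obtain ⟨d₀, hd₀D, hd₀⟩ := hne
  have hD'ne : (D.erase 0).Nonempty := ⟨d₀, Finset.mem_erase.mpr ⟨hd₀, hd₀D⟩⟩
  set δ : ℝ := (D.erase 0).inf' hD'ne (fun d => ‖d‖) with hδdef
  have hδpos : 0 < δ := by
    rw [hδdef, Finset.lt_inf'_iff]
    intro d hd
    exact norm_pos_iff.mpr (Finset.ne_of_mem_erase hd)
  set M0 : ℝ := D.sup' ⟨d₀, hd₀D⟩ (fun d => ‖d‖) with hM0def
  set M : ℝ := M0 * (1 - R)⁻¹ with hMdef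
  have hM0nonneg : 0 ≤ M0 := le_trans (norm_nonneg d₀) (Finset.le_sup' _ hd₀D)
  have h1R : 0 < 1 - R := by linarith
  have hMnonneg : 0 ≤ M := mul_nonneg hM0nonneg (by positivity)
  have hratlt : ρ / R < 1 := by rw [div_lt_one hR0]; exact hρR
  have hratnn : 0 ≤ ρ / R := by positivity
  obtain ⟨kr, hkr⟩ := exists_pow_lt_of_lt_one
    (show (0:ℝ) < δ / (M + 1) by positivity) hratlt
  refine ⟨kr, ?_⟩
  intro a haD ha0 s hsz
  set f : ℂ → ℂ := fun w => ∑' j : ℕ, a j * w ^ j with hfdef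
  have hcoef : ∀ j, ‖a j‖ ≤ M0 := fun j => Finset.le_sup' (fun d => ‖d‖) (haD j)
  set p := FormalMultilinearSeries.ofScalars ℂ a with hpdef
  have hrad : 1 ≤ p.radius := by
    apply FormalMultilinearSeries.le_radius_of_bound p M0 (r := 1)
    intro n
    rw [hpdef, FormalMultilinearSeries.ofScalars_norm]
    simpa using hcoef n
  have hfeq : f = p.sum := by
    funext w
    rw [hfdef]
    show ∑' j : ℕ, a j * w ^ j = FormalMultilinearSeries.ofScalarsSum a w
    rw [FormalMultilinearSeries.ofScalars_sum_eq]
    simp [smul_eq_mul]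
  have hps : HasFPowerSeriesOnBall f p 0 1 := by
    rw [hfeq]
    exact (p.hasFPowerSeriesOnBall (lt_of_lt_of_le one_pos hrad)).mono one_pos hrad
  have hanal : AnalyticOnNhd ℂ f (ball (0:ℂ) 1) := by
    have := hps.analyticOnNhd
    rwa [show ((1:ℝ≥0∞)) = ((1:ℝ≥0) : ℝ≥0∞) by norm_num, Metric.emetric_ball_nnreal] at this
  have hbound : ∀ z : ℂ, ‖z‖ ≤ R → ‖f z‖ ≤ M := by
    intro z hz
    have hgeo : HasSum (fun j : ℕ => M0 * R ^ j) M :=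
      (hasSum_geometric_of_lt_one hR0.le hR1).mul_left M0
    refine tsum_of_norm_bounded hgeo ?_
    intro j
    rw [norm_mul, norm_pow]
    exact mul_le_mul (hcoef j) (pow_le_pow_left₀ (norm_nonneg z) hz j)
      (by positivity) hM0nonneg
  have hf0 : f 0 = a 0 := by
    rw [hfdef]
    show ∑' j : ℕ, a j * (0:ℂ) ^ j = a 0
    rw [tsum_eq_single 0 (fun j hj => by simp [zero_pow hj])]
    simp
  by_contra hc
  rw [not_le] at hc
  set n : ℂ → ℕ := fun z => (zeroOrder f z).toNat with hndef
  have hmem1 : ∀ z ∈ s, z ∈ closedBall (0:ℂ) ρ := fun z hz =>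
    mem_closedBall_zero_iff.mpr ((hsz z hz).1)
  have hball1 : ∀ z ∈ s, z ∈ ball (0:ℂ) 1 := fun z hz =>
    mem_ball_zero_iff.mpr
      (lt_of_le_of_lt (mem_closedBall_zero_iff.mp (hmem1 z hz)) (hρR.trans hR1))
  have hfin : ∀ z ∈ s, zeroOrder f z ≠ ⊤ := by
    intro z hzs htop
    have hA : AnalyticAt ℂ f z := hanal z (hball1 z hzs)
    rw [zeroOrder, dif_pos hA] at htop
    have hev : ∀ᶠ w in 𝓝 z, f w = 0 := analyticOrderAt_eq_top.mp htop
    have hzero : EqOn f 0 (ball (0:ℂ) 1) :=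
      hanal.eqOn_zero_of_preconnected_of_eventuallyEq_zero
        (convex_ball (0:ℂ) 1).isPreconnected (hball1 z hzs) hev
    have : f 0 = 0 := hzero (mem_ball_zero_iff.mpr (by norm_num))
    rw [hf0] at this
    exact ha0 this
  have hcast : ∀ z ∈ s, (n z : ℕ∞) = zeroOrder f z := fun z hz =>
    ENat.coe_toNat (hfin z hz)
  have hsumlt : kr < ∑ z ∈ s, n z := by
    have h1 : ∑ z ∈ s, zeroOrder f z = ((∑ z ∈ s, n z : ℕ) : ℕ∞) := by
      rw [Nat.cast_sum]
      exact (Finset.sum_congr rfl hcast).symm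
    rw [h1] at hc
    exact_mod_cast hc
  have hkey := key_peel ρ R M hρ0 hρR hR1 hMnonneg kr f hanal
    (fun z hz => hbound z (le_of_eq (mem_sphere_zero_iff_norm.mp hz)))
    s n (fun z hz => ⟨hmem1 z hz, (hcast z hz).le⟩) hsumlt.le
  have hδa : δ ≤ ‖a 0‖ :=
    Finset.inf'_le (fun d => ‖d‖) (Finset.mem_erase.mpr ⟨ha0, haD 0⟩)
  have hlt : M * (ρ / R) ^ kr < δ := by
    calc M * (ρ / R) ^ kr ≤ (M + 1) * (ρ / R) ^ kr := by
          apply mul_le_mul_of_nonneg_right (by linarith) (by positivity)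
      _ < (M + 1) * (δ / (M + 1)) := by
          apply mul_lt_mul_of_pos_left hkr (by linarith)
      _ = δ := by field_simp
  rw [hf0] at hkey
  linarith
end
end

section
/- Let Λ be a finite index set with #Λ ≥ 2, let a = (a_i)_{i∈Λ} ∈ ℂ^Λ, let λ ∈ ℂ with 0 < |λ| < 1, and let k ≥ 2 be an integer. Define b = (b_w)_{w∈Λ^{k−1}} ∈ ℂ^{Λ^{k−1}} by b_w = ∑_{j=0}^{k−2} λ^j a_{w_{j+1}}. Then for every n ≥ 1, Δ_n(λ^k, b) ≥ Δ_{kn}(λ, a). -/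
open MeasureTheory Set Filter Metric
open scoped ENNReal NNReal Topology

noncomputable section

/-- **Cylinder separation under iteration.** For `#Λ ≥ 2`, `0 < |λ| < 1` and `k ≥ 2`, with
`b_w = ∑_{j=0}^{k-2} λʲ a_{w_{j+1}}` for `w ∈ Λ^{k-1}`, one has
`Δ_n(λᵏ, b) ≥ Δ_{kn}(λ, a)` for all `n ≥ 1`. -/

theorem Delta_iterate_ge {Λ : Type*} [Fintype Λ]
    (hm : 2 ≤ Fintype.card Λ) (a : Λ → ℂ) (lam : ℂ)
    (h0 : 0 < ‖lam‖) (h1 : ‖lam‖ < 1) (k : ℕ) (hk : 2 ≤ k) :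
    ∀ n : ℕ, 1 ≤ n →
      Delta (lam ^ k)
        (fun w : Fin (k - 1) → Λ => ∑ j : Fin (k - 1), lam ^ (j : ℕ) * a (w j)) n ≥
      Delta lam a (k * n) := by
  intro n hn
  obtain ⟨q, rfl⟩ : ∃ q, k = q + 1 := ⟨k - 1, by omega⟩
  have hq : 1 ≤ q := by omega
  set k := q + 1 with hkdef
  have hΛ : Nonempty Λ := Fintype.card_pos_iff.mp (by omega)
  have ⟨x, y, hxy⟩ : ∃ x y : Λ, x ≠ y := Fintype.exists_pair_of_one_lt_card hm
  -- the equivalence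
  let e : Fin n × Fin k ≃ Fin (k * n) := finProdFinEquiv.trans (finCongr (mul_comm n k))
  have he : ∀ p : Fin n × Fin k, ((e p : Fin (k*n)) : ℕ) = (p.2 : ℕ) + k * (p.1 : ℕ) := by
    intro p; simp [e, finProdFinEquiv]
  -- extension of words
  let G : (Fin n → Fin (k-1) → Λ) → Fin n × Fin k → Λ := fun i p =>
    if h : (p.2 : ℕ) < k - 1 then i p.1 ⟨p.2, h⟩ else Classical.arbitrary Λ
  let E : (Fin n → Fin (k-1) → Λ) → Fin (k*n) → Λ := fun i m => G i (e.symm m)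
  have hEe : ∀ i p, E i (e p) = G i p := by intro i p; simp [E]
  have hGval : ∀ (i : Fin n → Fin (k-1) → Λ) (ℓ : Fin n) (j : Fin q),
      G i (ℓ, Fin.castSucc j) = i ℓ j := by
    intro i ℓ j
    have hj : ((Fin.castSucc j : Fin k) : ℕ) < k - 1 := by
      have := j.isLt; simp only [Fin.coe_castSucc]; omega
    simp only [G]; exact (dif_pos hj).trans rfl
  have hGlast : ∀ (i : Fin n → Fin (k-1) → Λ) (ℓ : Fin n),
      G i (ℓ, Fin.last q) = Classical.arbitrary Λ := by
    intro i ℓ; simp only [G]; exact dif_neg (by simp only [Fin.val_last]; omega)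
  -- injectivity
  have hinj : Function.Injective E := by
    intro i j hij
    funext ℓ jj
    have := congrFun hij (e (ℓ, Fin.castSucc jj))
    rw [hEe, hEe, hGval, hGval] at this
    exact this
  -- key sum identity
  have key : ∀ i j : Fin n → Fin (k-1) → Λ,
      ∑ m : Fin (k*n), lam ^ (m : ℕ) * (a (E i m) - a (E j m)) =
      ∑ ℓ : Fin n, (lam ^ k) ^ (ℓ : ℕ) *
        ((∑ jj : Fin (k-1), lam ^ (jj:ℕ) * a (i ℓ jj)) -
         (∑ jj : Fin (k-1), lam ^ (jj:ℕ) * a (j ℓ jj))) := by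
    intro i j
    rw [← Fintype.sum_equiv e (fun p => lam ^ ((e p : Fin (k*n)) : ℕ) * (a (E i (e p)) - a (E j (e p))))
        (fun m => lam ^ (m:ℕ) * (a (E i m) - a (E j m))) (fun p => rfl)]
    rw [Fintype.sum_prod_type]
    refine Finset.sum_congr rfl fun ℓ _ => ?_
    rw [Fin.sum_univ_castSucc]
    simp only [hEe, hGval, hGlast, he, sub_self, mul_zero, add_zero]
    rw [mul_sub, Finset.mul_sum, Finset.mul_sum, ← Finset.sum_sub_distrib]
    refine Finset.sum_congr rfl fun jj _ => ?_
    have : ((Fin.castSucc jj : Fin k) : ℕ) = (jj : ℕ) := rfl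
    rw [this, pow_add, pow_mul]
    ring
  -- main argument
  unfold Delta
  refine csInf_le_csInf ?_ ?_ ?_
  · exact ⟨0, fun x ⟨i, j, _, hx⟩ => hx ▸ norm_nonneg _⟩
  · refine ⟨_, fun _ _ => x, fun _ _ => y, ?_, rfl⟩
    intro h
    exact hxy (congrFun (congrFun h ⟨0, by omega⟩) ⟨0, by omega⟩)
  · rintro z ⟨i, j, hij, rfl⟩
    exact ⟨E i, E j, fun h => hij (hinj h), by rw [key]⟩
end
end
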